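/- arXiv:2403.01945 — 5 statements merged into one kernel-verified Lean document; each statement's English description precedes it below -/
import Mathlib

section
/- Let w̄ and w be Markovian strategies, let μ̄ and μ be solutions of the FPK equation for w̄ and for w respectively, both with the same initial law ϑ, and let p̄ : I × ℝⁿ → ℝ be of class C^{1,2}, bounded together with ∂_t p̄, ∇_x p̄ and ∇²_x p̄, satisfying ∂_s p̄_s(x) + ∇p̄_s(x)·f(s,x,w̄_s(x)) + β Δp̄_s(x) = 0 for all (s,x) ∈ I × ℝⁿ and p̄_T = ℓ. Then the exact increment formula holds: ∫ ℓ dμ_T − ∫ ℓ dμ̄_T = ∫_0^T ∫ ∇p̄_s(x)·( f(s,x,w_s(x)) − f(s,x,w̄_s(x)) ) dμ_s(x) ds. -/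
open MeasureTheory intervalIntegral

noncomputable section

/-- Euclidean space ℝⁿ. -/
abbrev Eu (n : ℕ) : Type := EuclideanSpace ℝ (Fin n)

/-- Laplacian of `φ` at `x`: the trace of the Hessian. -/
def lapl {n : ℕ} (φ : Eu n → ℝ) (x : Eu n) : ℝ :=
  ∑ i : Fin n, fderiv ℝ (fun y => fderiv ℝ φ y (EuclideanSpace.single i 1)) x
    (EuclideanSpace.single i 1)

/-- `η` is of class C^{1,2} (C¹ in time, C² in space) and bounded together with
`∂ₜη`, `∇ₓη` and `∇²ₓη`. -/
structure C12Bdd {n : ℕ} (η : ℝ → Eu n → ℝ) : Prop where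
  smooth_t : ∀ x, ContDiff ℝ 1 fun t => η t x
  smooth_x : ∀ t, ContDiff ℝ 2 (η t)
  bdd : ∃ C, ∀ t x, |η t x| ≤ C
  bdd_dt : ∃ C, ∀ t x, |deriv (fun s => η s x) t| ≤ C
  bdd_grad : ∃ C, ∀ t x, ‖gradient (η t) x‖ ≤ C
  bdd_hess : ∃ C, ∀ t x, ‖fderiv ℝ (fderiv ℝ (η t)) x‖ ≤ C

/-- `μ : [0,T] → P(ℝⁿ)` is a (distributional) solution of the Fokker–Planck–Kolmogorov
equation for the Markovian strategy `w`, drift `f`, diffusion constant `β`, with initial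
law `ϑ`. -/
def IsFPK {n m : ℕ} (T : ℝ) (f : ℝ → Eu n → Eu m → Eu n) (β : ℝ)
    (w : ℝ → Eu n → Eu m) (ϑ : Measure (Eu n)) (μ : ℝ → Measure (Eu n)) : Prop :=
  (∀ t, IsProbabilityMeasure (μ t)) ∧
  μ 0 = ϑ ∧
  (∀ φ : Eu n → ℝ, Continuous φ → (∃ C, ∀ x, |φ x| ≤ C) →
    Measurable fun t => ∫ x, φ x ∂μ t) ∧
  (∀ η : ℝ → Eu n → ℝ, C12Bdd η → ∀ t ∈ Set.Icc (0:ℝ) T,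
    (∫ x, η t x ∂μ t) - (∫ x, η 0 x ∂μ 0) =
      ∫ s in (0:ℝ)..t, ∫ x, (deriv (fun r => η r x) s
        + (inner ℝ (gradient (η s) x) (f s x (w s x)) : ℝ) + β * lapl (η s) x) ∂μ s)

theorem exact_increment_formula_markovian
    {n m : ℕ} (hn : 1 ≤ n) (hm : 1 ≤ m) (T : ℝ) (hT : 0 < T)
    (U : Set (Eu m)) (hUne : U.Nonempty) (hUcp : IsCompact U)
    (f : ℝ → Eu n → Eu m → Eu n)
    (hfmeas : Measurable fun p : ℝ × Eu n × Eu m => f p.1 p.2.1 p.2.2)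
    (hfbdd : ∃ C, ∀ t x υ, ‖f t x υ‖ ≤ C)
    (β : ℝ) (hβ : 0 < β)
    (ℓ : Eu n → ℝ) (hℓ : ContDiff ℝ 2 ℓ) (hℓbdd : ∃ C, ∀ x, |ℓ x| ≤ C)
    (wb : ℝ → Eu n → Eu m)
    (hwbmeas : Measurable fun p : ℝ × Eu n => wb p.1 p.2)
    (hwbU : ∀ t x, wb t x ∈ U)
    (w : ℝ → Eu n → Eu m)
    (hwmeas : Measurable fun p : ℝ × Eu n => w p.1 p.2)
    (hwU : ∀ t x, w t x ∈ U)
    (ϑ : Measure (Eu n)) (μb μ : ℝ → Measure (Eu n))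
    (hFPKb : IsFPK T f β wb ϑ μb) (hFPK : IsFPK T f β w ϑ μ)
    (pb : ℝ → Eu n → ℝ) (hpb : C12Bdd pb)
    (hpde : ∀ s ∈ Set.Icc (0:ℝ) T, ∀ x : Eu n,
      deriv (fun r => pb r x) s + (inner ℝ (gradient (pb s) x) (f s x (wb s x)) : ℝ)
        + β * lapl (pb s) x = 0)
    (hterm : ∀ x, pb T x = ℓ x) :
    (∫ x, ℓ x ∂μ T) - (∫ x, ℓ x ∂μb T) =
      ∫ s in (0:ℝ)..T, ∫ x,
        (inner ℝ (gradient (pb s) x) (f s x (w s x) - f s x (wb s x)) : ℝ) ∂μ s := by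
  have hTmem : T ∈ Set.Icc (0:ℝ) T := ⟨hT.le, le_refl T⟩
  have h1 := hFPK.2.2.2 pb hpb T hTmem
  have h2 := hFPKb.2.2.2 pb hpb T hTmem
  have hμ0 : μ 0 = ϑ := hFPK.2.1
  have hμb0 : μb 0 = ϑ := hFPKb.2.1
  have hℓT : ∀ (ν : Measure (Eu n)), (∫ x, pb T x ∂ν) = ∫ x, ℓ x ∂ν := by
    intro ν; exact integral_congr_ae (Filter.Eventually.of_forall fun x => hterm x)
  rw [hℓT, hμ0] at h1
  rw [hℓT, hμb0] at h2
  have h2z : (∫ s in (0:ℝ)..T, ∫ x, (deriv (fun r => pb r x) s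
      + (inner ℝ (gradient (pb s) x) (f s x (wb s x)) : ℝ) + β * lapl (pb s) x) ∂μb s) = 0 := by
    rw [intervalIntegral.integral_congr (g := fun _ => (0:ℝ))]
    · simp
    · intro s hs
      rw [Set.uIcc_of_le hT.le] at hs
      have : (fun x => deriv (fun r => pb r x) s
          + (inner ℝ (gradient (pb s) x) (f s x (wb s x)) : ℝ) + β * lapl (pb s) x)
          = fun _ => (0:ℝ) := funext fun x => hpde s hs x
      dsimp only; rw [this, integral_zero]
  rw [h2z] at h2
  have key : (∫ x, ℓ x ∂μ T) - (∫ x, ℓ x ∂μb T)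
      = ∫ s in (0:ℝ)..T, ∫ x, (deriv (fun r => pb r x) s
        + (inner ℝ (gradient (pb s) x) (f s x (w s x)) : ℝ) + β * lapl (pb s) x) ∂μ s := by
    linarith [h1, h2]
  rw [key]
  apply intervalIntegral.integral_congr
  intro s hs
  rw [Set.uIcc_of_le hT.le] at hs
  apply MeasureTheory.integral_congr_ae
  apply Filter.Eventually.of_forall
  intro x
  have h0 := hpde s hs x
  have : deriv (fun r => pb r x) s + β * lapl (pb s) x
      = -(inner ℝ (gradient (pb s) x) (f s x (wb s x)) : ℝ) := by linarith
  dsimp only; rw [inner_sub_right]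
  linarith
end
end

section
/- Let w̄ and w be Markovian strategies, μ̄ and μ solutions of the FPK equation for w̄ and for w respectively with the same initial law ϑ, and p̄ a bounded C^{1,2} function (with bounded ∂_t p̄, ∇_x p̄, ∇²_x p̄) satisfying ∂_s p̄_s(x) + ∇p̄_s(x)·f(s,x,w̄_s(x)) + β Δp̄_s(x) = 0 and p̄_T = ℓ. Assume in addition that for almost every s ∈ I and every x ∈ ℝⁿ the comparison control w minimizes the Hamiltonian: ∇p̄_s(x)·f(s,x,w_s(x)) = min over υ ∈ U of ∇p̄_s(x)·f(s,x,υ). Then the descent property ∫ ℓ dμ_T ≤ ∫ ℓ dμ̄_T holds. -/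
open MeasureTheory intervalIntegral

noncomputable section

theorem descent_property_markovian
    {n m : ℕ} (hn : 1 ≤ n) (hm : 1 ≤ m) (T : ℝ) (hT : 0 < T)
    (U : Set (Eu m)) (hUne : U.Nonempty) (hUcp : IsCompact U)
    (f : ℝ → Eu n → Eu m → Eu n)
    (hfmeas : Measurable fun p : ℝ × Eu n × Eu m => f p.1 p.2.1 p.2.2)
    (hfbdd : ∃ C, ∀ t x υ, ‖f t x υ‖ ≤ C)
    (β : ℝ) (hβ : 0 < β)
    (ℓ : Eu n → ℝ) (hℓ : ContDiff ℝ 2 ℓ) (hℓbdd : ∃ C, ∀ x, |ℓ x| ≤ C)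
    (wb : ℝ → Eu n → Eu m)
    (hwbmeas : Measurable fun p : ℝ × Eu n => wb p.1 p.2)
    (hwbU : ∀ t x, wb t x ∈ U)
    (w : ℝ → Eu n → Eu m)
    (hwmeas : Measurable fun p : ℝ × Eu n => w p.1 p.2)
    (hwU : ∀ t x, w t x ∈ U)
    (ϑ : Measure (Eu n)) (μb μ : ℝ → Measure (Eu n))
    (hFPKb : IsFPK T f β wb ϑ μb) (hFPK : IsFPK T f β w ϑ μ)
    (pb : ℝ → Eu n → ℝ) (hpb : C12Bdd pb)
    (hpde : ∀ s ∈ Set.Icc (0:ℝ) T, ∀ x : Eu n,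
      deriv (fun r => pb r x) s + (inner ℝ (gradient (pb s) x) (f s x (wb s x)) : ℝ)
        + β * lapl (pb s) x = 0)
    (hterm : ∀ x, pb T x = ℓ x)
    (hmin : ∀ᵐ s ∂(volume.restrict (Set.Icc (0:ℝ) T)), ∀ x : Eu n, ∀ υ ∈ U,
      (inner ℝ (gradient (pb s) x) (f s x (w s x)) : ℝ) ≤
        (inner ℝ (gradient (pb s) x) (f s x υ) : ℝ)) :
    (∫ x, ℓ x ∂μ T) ≤ ∫ x, ℓ x ∂μb T := by
  have hTmem : T ∈ Set.Icc (0:ℝ) T := ⟨hT.le, le_refl T⟩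
  have eb := hFPKb.2.2.2 pb hpb T hTmem
  have e := hFPK.2.2.2 pb hpb T hTmem
  rw [hFPKb.2.1] at eb
  rw [hFPK.2.1] at e
  simp only [hterm] at eb e
  -- RHS for μb is zero
  have hzero : (∫ s in (0:ℝ)..T, ∫ x, (deriv (fun r => pb r x) s
      + (inner ℝ (gradient (pb s) x) (f s x (wb s x)) : ℝ) + β * lapl (pb s) x) ∂μb s) = 0 := by
    rw [intervalIntegral.integral_of_le hT.le]
    have : ∀ s ∈ Set.Ioc (0:ℝ) T, (∫ x, (deriv (fun r => pb r x) s
        + (inner ℝ (gradient (pb s) x) (f s x (wb s x)) : ℝ) + β * lapl (pb s) x) ∂μb s) = 0 := by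
      intro s hs
      have h0 : ∀ x : Eu n, (deriv (fun r => pb r x) s
          + (inner ℝ (gradient (pb s) x) (f s x (wb s x)) : ℝ) + β * lapl (pb s) x) = 0 :=
        hpde s ⟨hs.1.le, hs.2⟩
      simp only [h0, integral_zero]
    calc (∫ s in Set.Ioc (0:ℝ) T, ∫ x, (deriv (fun r => pb r x) s
          + (inner ℝ (gradient (pb s) x) (f s x (wb s x)) : ℝ) + β * lapl (pb s) x) ∂μb s)
        = ∫ _s in Set.Ioc (0:ℝ) T, (0:ℝ) := by
          apply setIntegral_congr_fun measurableSet_Ioc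
          intro s hs; exact this s hs
      _ = 0 := by simp
  -- RHS for μ is nonpositive
  have hneg : (∫ s in (0:ℝ)..T, ∫ x, (deriv (fun r => pb r x) s
      + (inner ℝ (gradient (pb s) x) (f s x (w s x)) : ℝ) + β * lapl (pb s) x) ∂μ s) ≤ 0 := by
    rw [intervalIntegral.integral_of_le hT.le]
    apply integral_nonpos_of_ae
    have hmin' : ∀ᵐ s ∂(volume.restrict (Set.Ioc (0:ℝ) T)), ∀ x : Eu n, ∀ υ ∈ U,
        (inner ℝ (gradient (pb s) x) (f s x (w s x)) : ℝ) ≤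
          (inner ℝ (gradient (pb s) x) (f s x υ) : ℝ) :=
      ae_restrict_of_ae_restrict_of_subset Set.Ioc_subset_Icc_self hmin
    filter_upwards [ae_restrict_mem measurableSet_Ioc, hmin'] with s hs hmins
    have hsI : s ∈ Set.Icc (0:ℝ) T := ⟨hs.1.le, hs.2⟩
    apply integral_nonpos
    intro x
    have h0 := hpde s hsI x
    have hle := hmins x (wb s x) (hwbU s x)
    simp only [Pi.zero_apply]
    linarith
  linarith
end
end

section
/- Let H : I × ℝⁿ × U → ℝ be bounded and continuous, and let μ : I → P(ℝⁿ) be a curve of Borel probability measures such that t ↦ ∫φ dμ_t is Borel measurable for every bounded continuous φ : ℝⁿ → ℝ. Then there exists a Borel measurable map u : I → U such that for every t ∈ I: ∫ H(t,x,u(t)) dμ_t(x) = min over υ ∈ U of ∫ H(t,x,υ) dμ_t(x); in particular, for each t the map υ ↦ ∫ H(t,x,υ) dμ_t(x) is continuous on U and its minimum over U is attained. -/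
open MeasureTheory intervalIntegral

noncomputable section

def coordF (m : ℕ) (υ : Eu m) (l : ℕ) : ℝ := if h : l < m then υ ⟨l, h⟩ else 0

lemma coordF_continuous (m l : ℕ) : Continuous fun υ : Eu m => coordF m υ l := by
  unfold coordF
  split
  · exact ((EuclideanSpace.proj (𝕜 := ℝ) (⟨l, ‹_›⟩ : Fin m)).continuous)
  · exact continuous_const

lemma abs_coordF_le (m l : ℕ) (υ : Eu m) : |coordF m υ l| ≤ ‖υ‖ := by
  unfold coordF
  split
  · have h := EuclideanSpace.norm_eq υ
    have h1 : |υ ⟨l, ‹_›⟩| = Real.sqrt (|υ ⟨l, ‹_›⟩| ^ 2) := by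
      rw [Real.sqrt_sq (abs_nonneg _)]
    rw [h1, h]
    apply Real.sqrt_le_sqrt
    exact Finset.single_le_sum (f := fun i => ‖υ i‖ ^ 2)
      (fun i _ => by positivity) (Finset.mem_univ _)
  · simp

/-- `ite` with a fixed classical decidability instance. -/
def iteR (P : Prop) (a b : ℝ) : ℝ := @ite _ P (Classical.propDecidable P) a b

lemma iteR_pos {P : Prop} (h : P) (a b : ℝ) : iteR P a b = a := by
  unfold iteR; exact if_pos h

lemma iteR_neg {P : Prop} (h : ¬ P) (a b : ℝ) : iteR P a b = b := by
  unfold iteR; exact if_neg h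

lemma iteR_mem {P : Prop} (a b : ℝ) : iteR P a b = a ∨ iteR P a b = b := by
  by_cases h : P
  · exact Or.inl (iteR_pos h a b)
  · exact Or.inr (iteR_neg h a b)

lemma measurable_iteR {δ : Type*} [MeasurableSpace δ] {p : δ → Prop} {a b : ℝ}
    (hp : MeasurableSet {x | p x}) : Measurable fun x => iteR (p x) a b := by
  unfold iteR
  exact @Measurable.ite _ _ _ _ _ _ _ (fun x => Classical.propDecidable (p x)) hp
    measurable_const measurable_const

/-- One step of the lexicographic construction : the `i`-th coordinate value,
given the previously constructed coordinates `prev`. -/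
def stepF {m : ℕ} (g : ℝ → Eu m → ℝ) (D : ℕ → Eu m) (R : ℝ) (i : ℕ)
    (prev : ℝ → ℕ → ℝ) (t : ℝ) : ℝ :=
  ⨆ j : ℕ, ⨅ k : ℕ,
    iteR (g t (D k) < (⨅ k' : ℕ, g t (D k')) + ((j : ℝ) + 1)⁻¹ ∧
        ∀ l, l < i → coordF m (D k) l < prev t l + ((j : ℝ) + 1)⁻¹)
      (coordF m (D k) i) R

/-- history vector of coordinates `0,…,i-1`. -/
def cvF {m : ℕ} (g : ℝ → Eu m → ℝ) (D : ℕ → Eu m) (R : ℝ) : ℕ → ℝ → ℕ → ℝ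
  | 0 => fun _ _ => 0
  | (i+1) => fun t l => if l = i then stepF g D R i (cvF g D R i) t else cvF g D R i t l

/-- the `i`-th lexicographic coordinate function. -/
def cF {m : ℕ} (g : ℝ → Eu m → ℝ) (D : ℕ → Eu m) (R : ℝ) (i : ℕ) (t : ℝ) : ℝ :=
  cvF g D R (i+1) t i

lemma cvF_eq_cF {m : ℕ} (g : ℝ → Eu m → ℝ) (D : ℕ → Eu m) (R : ℝ) :
    ∀ i l, l < i → ∀ t, cvF g D R i t l = cF g D R l t := by
  intro i
  induction i with
  | zero => omega
  | succ i ih =>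
    intro l hl t
    rcases Nat.lt_succ_iff_lt_or_eq.mp hl with h | h
    · have : l ≠ i := Nat.ne_of_lt h
      simp only [cvF, if_neg this]
      exact ih l h t
    · subst h
      simp only [cF, cvF]

lemma stepF_congr {m : ℕ} (g : ℝ → Eu m → ℝ) (D : ℕ → Eu m) (R : ℝ) (i : ℕ)
    (p q : ℝ → ℕ → ℝ) (t : ℝ) (h : ∀ l, l < i → p t l = q t l) :
    stepF g D R i p t = stepF g D R i q t := by
  classical
  unfold stepF
  congr 1
  funext j
  congr 1
  funext k
  have : (∀ l, l < i → coordF m (D k) l < p t l + ((j : ℝ) + 1)⁻¹) ↔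
      (∀ l, l < i → coordF m (D k) l < q t l + ((j : ℝ) + 1)⁻¹) := by
    constructor <;> intro hh l hl <;> [rw [← h l hl]; rw [h l hl]] <;> exact hh l hl
  by_cases hc : g t (D k) < (⨅ k' : ℕ, g t (D k')) + ((j : ℝ) + 1)⁻¹ ∧
      ∀ l, l < i → coordF m (D k) l < p t l + ((j : ℝ) + 1)⁻¹
  · rw [iteR_pos hc, iteR_pos ⟨hc.1, this.mp hc.2⟩]
  · rw [iteR_neg hc, iteR_neg fun hc2 => hc ⟨hc2.1, this.mpr hc2.2⟩]

lemma cF_eq {m : ℕ} (g : ℝ → Eu m → ℝ) (D : ℕ → Eu m) (R : ℝ) (i : ℕ) (t : ℝ) :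
    cF g D R i t = stepF g D R i (fun t l => cF g D R l t) t := by
  have h1 : cF g D R i t = stepF g D R i (cvF g D R i) t := by
    simp [cF, cvF]
  rw [h1]
  exact stepF_congr g D R i _ _ t (fun l hl => cvF_eq_cF g D R i l hl t)

/-- the `j`-approximate constraint predicate. -/
def PP {m : ℕ} (g : ℝ → Eu m → ℝ) (D : ℕ → Eu m) (R : ℝ) (i : ℕ) (t : ℝ) (j k : ℕ) : Prop :=
  g t (D k) < (⨅ k' : ℕ, g t (D k')) + ((j : ℝ) + 1)⁻¹ ∧
    ∀ l, l < i → coordF m (D k) l < cF g D R l t + ((j : ℝ) + 1)⁻¹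

def FF {m : ℕ} (g : ℝ → Eu m → ℝ) (D : ℕ → Eu m) (R : ℝ) (i : ℕ) (t : ℝ) (j k : ℕ) : ℝ :=
  iteR (PP g D R i t j k) (coordF m (D k) i) R

lemma cF_eq' {m : ℕ} (g : ℝ → Eu m → ℝ) (D : ℕ → Eu m) (R : ℝ) (i : ℕ) (t : ℝ) :
    cF g D R i t = ⨆ j : ℕ, ⨅ k : ℕ, FF g D R i t j k := by
  rw [cF_eq]; rfl

lemma cF_isLeast {m : ℕ} (U : Set (Eu m)) (hUcp : IsCompact U)
    (g : ℝ → Eu m → ℝ) (D : ℕ → Eu m) (hD : ∀ k, D k ∈ U)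
    (hdense : ∀ υ ∈ U, ∀ O : Set (Eu m), IsOpen O → υ ∈ O → ∃ k, D k ∈ O)
    (R : ℝ) (hR : ∀ υ ∈ U, ∀ l, |coordF m υ l| ≤ R - 1)
    (t : ℝ) (hgc : Continuous (g t)) (i : ℕ) :
    IsLeast ((fun υ => coordF m υ i) ''
      {υ | υ ∈ U ∧ (∀ w ∈ U, g t υ ≤ g t w) ∧ ∀ l, l < i → coordF m υ l = cF g D R l t})
      (cF g D R i t) := by
  -- preliminaries
  have hR1 : (1:ℝ) ≤ R := by
    have h1 := hR (D 0) (hD 0) 0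
    have h0 := abs_nonneg (coordF m (D 0) 0)
    linarith
  obtain ⟨υs, hυsU, hυsmin⟩ := hUcp.exists_isMinOn ⟨D 0, hD 0⟩ hgc.continuousOn
  have hυsmin' : ∀ w ∈ U, g t υs ≤ g t w := fun w hw => hυsmin hw
  have hbdd : BddBelow (Set.range fun k => g t (D k)) :=
    ⟨g t υs, by rintro x ⟨k, rfl⟩; exact hυsmin' _ (hD k)⟩
  have hm0_eq : (⨅ k' : ℕ, g t (D k')) = g t υs := by
    refine le_antisymm ?_ (le_ciInf fun k => hυsmin' _ (hD k))
    refine le_of_forall_pos_le_add fun ε hε => ?_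
    obtain ⟨k, hk⟩ := hdense υs hυsU {w | g t w < g t υs + ε}
      (isOpen_lt hgc continuous_const) (by simpa using hε)
    exact (ciInf_le hbdd k).trans hk.le
  have hm0_lb : ∀ w ∈ U, (⨅ k' : ℕ, g t (D k')) ≤ g t w := fun w hw => hm0_eq ▸ hυsmin' w hw
  have hεpos : ∀ j : ℕ, (0:ℝ) < ((j:ℝ)+1)⁻¹ := fun j => by positivity
  induction i using Nat.strong_induction_on with
  | _ i IH =>
  -- the "upgrade" lemma : approximate lexicographic minimality implies exact
  have upg : ∀ l, l < i → ∀ υ ∈ U, (∀ w ∈ U, g t υ ≤ g t w) →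
      (∀ l', l' < i → coordF m υ l' ≤ cF g D R l' t) → coordF m υ l = cF g D R l t := by
    intro l
    induction l using Nat.strong_induction_on with
    | _ l ihl =>
    intro hl υ hυ hmin hle
    refine le_antisymm (hle l hl) ?_
    exact (IH l hl).2 ⟨υ, ⟨hυ, hmin, fun l' hl' => ihl l' hl' (hl'.trans hl) υ hυ hmin hle⟩, rfl⟩
  have hSne : ∃ υ, υ ∈ U ∧ (∀ w ∈ U, g t υ ≤ g t w) ∧
      ∀ l, l < i → coordF m υ l = cF g D R l t := by
    cases i with
    | zero => exact ⟨υs, hυsU, hυsmin', by omega⟩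
    | succ i =>
      obtain ⟨υ, ⟨hυU, hmin, heq⟩, hco⟩ := (IH i (Nat.lt_succ_self i)).1
      refine ⟨υ, hυU, hmin, fun l hl => ?_⟩
      rcases Nat.lt_succ_iff_lt_or_eq.mp hl with h | h
      · exact heq l h
      · subst h; exact hco
  -- bounds on FF
  have hFlb : ∀ j k, 1 - R ≤ FF g D R i t j k := by
    intro j k
    by_cases hP : PP g D R i t j k
    · rw [show FF g D R i t j k = coordF m (D k) i from iteR_pos hP _ _]
      have h2 := (abs_le.mp (hR (D k) (hD k) i)).1
      linarith
    · rw [show FF g D R i t j k = R from iteR_neg hP _ _]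
      linarith
  have hbddF : ∀ j, BddBelow (Set.range (FF g D R i t j)) := fun j =>
    ⟨1 - R, by rintro x ⟨k, rfl⟩; exact hFlb j k⟩
  have hFleR : ∀ j k, FF g D R i t j k ≤ R := by
    intro j k
    by_cases hP : PP g D R i t j k
    · rw [show FF g D R i t j k = coordF m (D k) i from iteR_pos hP _ _]
      have h2 := (abs_le.mp (hR (D k) (hD k) i)).2
      linarith
    · rw [show FF g D R i t j k = R from iteR_neg hP _ _]
  have hbub : ∀ j, (⨅ k, FF g D R i t j k) ≤ R := fun j =>
    (ciInf_le (hbddF j) 0).trans (hFleR j 0)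
  have hbddb : BddAbove (Set.range fun j => ⨅ k, FF g D R i t j k) :=
    ⟨R, by rintro x ⟨j, rfl⟩; exact hbub j⟩
  -- the openness of the constraint sets
  have hOopen : ∀ j : ℕ, IsOpen {w : Eu m | g t w < (⨅ k' : ℕ, g t (D k')) + ((j:ℝ)+1)⁻¹ ∧
      ∀ l, l < i → coordF m w l < cF g D R l t + ((j:ℝ)+1)⁻¹} := by
    intro j
    have heq2 : {w : Eu m | g t w < (⨅ k' : ℕ, g t (D k')) + ((j:ℝ)+1)⁻¹ ∧
        ∀ l, l < i → coordF m w l < cF g D R l t + ((j:ℝ)+1)⁻¹}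
        = {w : Eu m | g t w < (⨅ k' : ℕ, g t (D k')) + ((j:ℝ)+1)⁻¹} ∩
          ⋂ l ∈ Finset.range i, {w : Eu m | coordF m w l < cF g D R l t + ((j:ℝ)+1)⁻¹} := by
      ext w
      simp only [Set.mem_setOf_eq, Set.mem_inter_iff, Set.mem_iInter, Finset.mem_range]
    rw [heq2]
    exact (isOpen_lt hgc continuous_const).inter
      (isOpen_biInter_finset fun l _ => isOpen_lt (coordF_continuous m l) continuous_const)
  -- lower-bound half
  have hlow : ∀ υ, υ ∈ U → (∀ w ∈ U, g t υ ≤ g t w) →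
      (∀ l, l < i → coordF m υ l = cF g D R l t) →
      (⨆ j, ⨅ k, FF g D R i t j k) ≤ coordF m υ i := by
    intro υ hυU hmin heq
    refine ciSup_le fun j => ?_
    refine le_of_forall_pos_le_add fun ε hε => ?_
    have hOopen2 : IsOpen ({w : Eu m | g t w < (⨅ k' : ℕ, g t (D k')) + ((j:ℝ)+1)⁻¹ ∧
        ∀ l, l < i → coordF m w l < cF g D R l t + ((j:ℝ)+1)⁻¹} ∩
        {w : Eu m | coordF m w i < coordF m υ i + ε}) :=
      (hOopen j).inter (isOpen_lt (coordF_continuous m i) continuous_const)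
    have hgυ : g t υ ≤ (⨅ k' : ℕ, g t (D k')) := hm0_eq ▸ hmin υs hυsU
    obtain ⟨k, hk⟩ := hdense υ hυU _ hOopen2
      ⟨⟨lt_add_of_le_of_pos hgυ (hεpos j),
        fun l hl => by rw [heq l hl]; exact lt_add_of_pos_right _ (hεpos j)⟩,
        lt_add_of_pos_right _ hε⟩
    calc (⨅ k', FF g D R i t j k') ≤ FF g D R i t j k := ciInf_le (hbddF j) k
      _ = coordF m (D k) i := iteR_pos hk.1 _ _
      _ ≤ coordF m υ i + ε := hk.2.le
  constructor
  · -- membership : construct a minimizing sequence and pass to the limit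
    have hsel : ∀ j : ℕ, ∃ k, PP g D R i t j k ∧
        coordF m (D k) i < (⨅ k', FF g D R i t j k') + ((j:ℝ)+1)⁻¹ := by
      intro j
      obtain ⟨υ0, hυ0U, hυ0min, hυ0eq⟩ := hSne
      have hgυ0 : g t υ0 ≤ (⨅ k' : ℕ, g t (D k')) := hm0_eq ▸ hυ0min υs hυsU
      obtain ⟨k0, hk0⟩ := hdense υ0 hυ0U _ (hOopen j)
        ⟨lt_add_of_le_of_pos hgυ0 (hεpos j),
          fun l hl => by rw [hυ0eq l hl]; exact lt_add_of_pos_right _ (hεpos j)⟩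
      have hbR1 : (⨅ k', FF g D R i t j k') ≤ R - 1 := by
        calc (⨅ k', FF g D R i t j k') ≤ FF g D R i t j k0 := ciInf_le (hbddF j) k0
          _ = coordF m (D k0) i := iteR_pos hk0 _ _
          _ ≤ R - 1 := (abs_le.mp (hR (D k0) (hD k0) i)).2
      have hδpos : (0:ℝ) < min ((j:ℝ)+1)⁻¹ (1/2) := lt_min (hεpos j) (by norm_num)
      obtain ⟨k, hk⟩ := exists_lt_of_ciInf_lt
        (a := (⨅ k', FF g D R i t j k') + min ((j:ℝ)+1)⁻¹ (1/2))
        (lt_add_of_pos_right _ hδpos)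
      by_cases hP : PP g D R i t j k
      · refine ⟨k, hP, ?_⟩
        rw [show FF g D R i t j k = coordF m (D k) i from iteR_pos hP _ _] at hk
        exact hk.trans_le (add_le_add_right (min_le_left _ _) _)
      · exfalso
        rw [show FF g D R i t j k = R from iteR_neg hP _ _] at hk
        have h2 : min ((j:ℝ)+1)⁻¹ (1/2) ≤ 1/2 := min_le_right _ _
        linarith
    choose ks hks1 hks2 using hsel
    obtain ⟨ub, hubU, φ, hφmono, hφtend⟩ :=
      hUcp.tendsto_subseq (x := fun j => D (ks j)) (fun j => hD _)
    have hφatTop : Filter.Tendsto φ Filter.atTop Filter.atTop := hφmono.tendsto_atTop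
    have hεtend : Filter.Tendsto (fun p => ((φ p : ℝ) + 1)⁻¹) Filter.atTop (nhds 0) := by
      apply tendsto_inv_atTop_zero.comp
      exact Filter.tendsto_atTop_add_const_right _ _ (tendsto_natCast_atTop_atTop.comp hφatTop)
    have hlim : ∀ (f : Eu m → ℝ), Continuous f → ∀ b : ℝ,
        (∀ p, f (D (ks (φ p))) < b + ((φ p:ℝ)+1)⁻¹) → f ub ≤ b := by
      intro f hf b hb
      have h1 : Filter.Tendsto (fun p => f (D (ks (φ p)))) Filter.atTop (nhds (f ub)) :=
        (hf.tendsto ub).comp hφtend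
      have h2 : Filter.Tendsto (fun p => b + ((φ p:ℝ)+1)⁻¹) Filter.atTop (nhds b) := by
        have := tendsto_const_nhds (x := b) (f := Filter.atTop (α := ℕ)) |>.add hεtend
        simpa using this
      exact le_of_tendsto_of_tendsto' h1 h2 fun p => (hb p).le
    have hgt : g t ub ≤ (⨅ k' : ℕ, g t (D k')) :=
      hlim (g t) hgc _ (fun p => (hks1 (φ p)).1)
    have hmin' : ∀ w ∈ U, g t ub ≤ g t w := fun w hw => hgt.trans (hm0_lb w hw)
    have hcoordle : ∀ l, l < i → coordF m ub l ≤ cF g D R l t := fun l hl =>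
      hlim (fun w => coordF m w l) (coordF_continuous m l) _
        (fun p => (hks1 (φ p)).2 l hl)
    have heq' : ∀ l, l < i → coordF m ub l = cF g D R l t :=
      fun l hl => upg l hl ub hubU hmin' hcoordle
    have hile : coordF m ub i ≤ ⨆ j, ⨅ k, FF g D R i t j k := by
      apply hlim (fun w => coordF m w i) (coordF_continuous m i)
      intro p
      calc coordF m (D (ks (φ p))) i
          < (⨅ k', FF g D R i t (φ p) k') + ((φ p:ℝ)+1)⁻¹ := hks2 (φ p)
        _ ≤ (⨆ j, ⨅ k, FF g D R i t j k) + ((φ p:ℝ)+1)⁻¹ :=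
            add_le_add_left (le_ciSup hbddb (φ p)) _
    have hige : (⨆ j, ⨅ k, FF g D R i t j k) ≤ coordF m ub i := hlow ub hubU hmin' heq'
    rw [cF_eq']
    exact ⟨ub, ⟨hubU, hmin', heq'⟩, le_antisymm hile hige⟩
  · rintro x ⟨υ, ⟨hυU, hmin, heq⟩, rfl⟩
    rw [cF_eq']
    exact hlow υ hυU hmin heq

lemma cF_measurable {m : ℕ} (g : ℝ → Eu m → ℝ) (D : ℕ → Eu m) (R : ℝ)
    (hgm : ∀ υ, Measurable fun t => g t υ) (i : ℕ) :
    Measurable fun t => cF g D R i t := by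
  induction i using Nat.strong_induction_on with
  | _ i IH =>
  have hm0 : Measurable fun t => ⨅ k' : ℕ, g t (D k') :=
    Measurable.iInf fun k => hgm (D k)
  simp only [cF_eq']
  apply Measurable.iSup
  intro j
  apply Measurable.iInf
  intro k
  unfold FF
  apply measurable_iteR
  unfold PP
  have h1 : MeasurableSet {t | g t (D k) < (⨅ k' : ℕ, g t (D k')) + ((j:ℝ)+1)⁻¹} :=
    measurableSet_lt (hgm (D k)) (hm0.add_const _)
  have h2 : MeasurableSet {t | ∀ l, l < i → coordF m (D k) l < cF g D R l t + ((j:ℝ)+1)⁻¹} := by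
    have heq3 : {t | ∀ l, l < i → coordF m (D k) l < cF g D R l t + ((j:ℝ)+1)⁻¹}
        = ⋂ l ∈ {l : ℕ | l < i}, {t | coordF m (D k) l < cF g D R l t + ((j:ℝ)+1)⁻¹} := by
      ext t
      simp only [Set.mem_setOf_eq, Set.mem_iInter]
    rw [heq3]
    exact MeasurableSet.biInter (Set.to_countable _)
      fun l hl => measurableSet_lt measurable_const ((IH l hl).add_const _)
  rw [Set.setOf_and]
  exact h1.inter h2

lemma exists_meas_argmin {m : ℕ} (U : Set (Eu m)) (hUne : U.Nonempty) (hUcp : IsCompact U)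
    (g : ℝ → Eu m → ℝ) (hgc : ∀ t, Continuous (g t))
    (hgm : ∀ υ, Measurable fun t => g t υ) :
    ∃ u : ℝ → Eu m, Measurable u ∧ (∀ t, u t ∈ U) ∧ ∀ t, ∀ υ ∈ U, g t (u t) ≤ g t υ := by
  have hne : Nonempty U := hUne.to_subtype
  obtain ⟨d, hd⟩ := TopologicalSpace.exists_dense_seq U
  set D : ℕ → Eu m := fun k => (d k : Eu m) with hDdef
  have hD : ∀ k, D k ∈ U := fun k => (d k).2
  have hdense : ∀ υ ∈ U, ∀ O : Set (Eu m), IsOpen O → υ ∈ O → ∃ k, D k ∈ O := by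
    intro υ hυ O hO hυO
    have hd' : Dense (Set.range d) := hd
    obtain ⟨x, hx1, hx2⟩ := hd'.exists_mem_open (hO.preimage continuous_subtype_val)
      ⟨⟨υ, hυ⟩, hυO⟩
    obtain ⟨k, rfl⟩ := hx1
    exact ⟨k, hx2⟩
  obtain ⟨B, hB⟩ := isBounded_iff_forall_norm_le.mp hUcp.isBounded
  set R : ℝ := B + 1 with hRdef
  have hR : ∀ υ ∈ U, ∀ l, |coordF m υ l| ≤ R - 1 := fun υ hυ l =>
    (abs_coordF_le m l υ).trans (by simpa [hRdef] using hB υ hυ)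
  have key : ∀ t, (WithLp.toLp 2 (fun i : Fin m => cF g D R i t) : Eu m) ∈ U ∧
      ∀ w ∈ U, g t (WithLp.toLp 2 (fun i : Fin m => cF g D R i t) : Eu m) ≤ g t w := by
    intro t
    obtain ⟨υ, ⟨hυU, hmin, heq⟩, -⟩ :=
      (cF_isLeast U hUcp g D hD hdense R hR t (hgc t) m).1
    have hυeq : υ = (WithLp.toLp 2 (fun i : Fin m => cF g D R i t) : Eu m) := by
      ext i
      have := heq i.1 i.2
      rw [coordF, dif_pos i.2] at this
      simpa using this
    exact ⟨hυeq ▸ hυU, hυeq ▸ hmin⟩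
  refine ⟨fun t => (WithLp.toLp 2 (fun i : Fin m => cF g D R i t) : Eu m), ?_, fun t => (key t).1,
    fun t υ hυ => (key t).2 υ hυ⟩
  exact (WithLp.measurable_toLp 2 (Fin m → ℝ)).comp (measurable_pi_lambda _ fun i => cF_measurable g D R hgm i)

lemma continuous_integral_param {n : ℕ} {X : Type*} [PseudoMetricSpace X]
    (ν : Measure (Eu n)) [IsProbabilityMeasure ν]
    (G : X → Eu n → ℝ) (hGc : Continuous fun p : X × Eu n => G p.1 p.2)
    (C : ℝ) (hGb : ∀ y x, |G y x| ≤ C) :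
    Continuous fun y => ∫ x, G y x ∂ν := by
  rw [continuous_iff_seqContinuous]
  intro ys y hy
  have : Filter.Tendsto (fun k => ∫ x, G (ys k) x ∂ν) Filter.atTop
      (nhds (∫ x, G y x ∂ν)) := by
    apply MeasureTheory.tendsto_integral_of_dominated_convergence (bound := fun _ => C)
    · intro k
      exact (hGc.comp (continuous_const.prodMk continuous_id)).aestronglyMeasurable
    · exact integrable_const C
    · intro k
      filter_upwards with x
      rw [Real.norm_eq_abs]
      exact hGb _ _
    · filter_upwards with x
      exact ((hGc.comp (continuous_id.prodMk continuous_const)).tendsto y).comp hy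
  exact this

lemma measurable_integral_diag {n m : ℕ}
    (H : ℝ → Eu n → Eu m → ℝ) (C : ℝ) (hC : ∀ t x υ, |H t x υ| ≤ C)
    (hHcont : Continuous fun p : ℝ × Eu n × Eu m => H p.1 p.2.1 p.2.2)
    (μ : ℝ → Measure (Eu n)) (hprob : ∀ t, IsProbabilityMeasure (μ t))
    (hmeas : ∀ φ : Eu n → ℝ, Continuous φ → (∃ C, ∀ x, |φ x| ≤ C) →
      Measurable fun t => ∫ x, φ x ∂μ t) (υ : Eu m) :
    Measurable fun t => ∫ x, H t x υ ∂μ t := by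
  have hmeasF : ∀ s : ℝ, Measurable fun t => ∫ x, H s x υ ∂μ t := by
    intro s
    refine hmeas (fun x => H s x υ) ?_ ⟨C, fun x => hC s x υ⟩
    exact hHcont.comp (continuous_const.prodMk (continuous_id.prodMk continuous_const))
  have hcontF : ∀ t : ℝ, Continuous fun s => ∫ x, H s x υ ∂μ t := by
    intro t
    haveI := hprob t
    exact continuous_integral_param (μ t) (fun s x => H s x υ)
      (hHcont.comp (continuous_fst.prodMk (continuous_snd.prodMk continuous_const)))
      C (fun s x => hC s x υ)
  have huncurry : Measurable (Function.uncurry fun s t => ∫ x, H s x υ ∂μ t) :=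
    measurable_uncurry_of_continuous_of_measurable (fun t => hcontF t) (fun s => hmeasF s)
  have heq : (fun t => ∫ x, H t x υ ∂μ t)
      = (Function.uncurry fun s t => ∫ x, H s x υ ∂μ t) ∘ (fun t => (t, t)) := rfl
  rw [heq]
  exact huncurry.comp (measurable_id.prodMk measurable_id)

theorem law_feedback_selection
    {n m : ℕ} (hn : 1 ≤ n) (hm : 1 ≤ m) (T : ℝ) (hT : 0 < T)
    (U : Set (Eu m)) (hUne : U.Nonempty) (hUcp : IsCompact U)
    (H : ℝ → Eu n → Eu m → ℝ)
    (hHbdd : ∃ C, ∀ t x υ, |H t x υ| ≤ C)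
    (hHcont : Continuous fun p : ℝ × Eu n × Eu m => H p.1 p.2.1 p.2.2)
    (μ : ℝ → Measure (Eu n)) (hprob : ∀ t, IsProbabilityMeasure (μ t))
    (hmeas : ∀ φ : Eu n → ℝ, Continuous φ → (∃ C, ∀ x, |φ x| ≤ C) →
      Measurable fun t => ∫ x, φ x ∂μ t) :
    ∃ u : ℝ → Eu m, Measurable u ∧ (∀ t, u t ∈ U) ∧
      ∀ t ∈ Set.Icc (0:ℝ) T,
        (ContinuousOn (fun υ => ∫ x, H t x υ ∂μ t) U) ∧
        ∀ υ ∈ U, (∫ x, H t x (u t) ∂μ t) ≤ ∫ x, H t x υ ∂μ t := by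
  obtain ⟨C, hC⟩ := hHbdd
  have hgc : ∀ t, Continuous fun υ : Eu m => ∫ x, H t x υ ∂μ t := by
    intro t
    haveI := hprob t
    exact continuous_integral_param (μ t) (fun υ x => H t x υ)
      (hHcont.comp (continuous_const.prodMk (continuous_snd.prodMk continuous_fst)))
      C (fun υ x => hC t x υ)
  have hgm : ∀ υ : Eu m, Measurable fun t => ∫ x, H t x υ ∂μ t :=
    measurable_integral_diag H C hC hHcont μ hprob hmeas
  obtain ⟨u, hu1, hu2, hu3⟩ := exists_meas_argmin U hUne hUcp
    (fun t υ => ∫ x, H t x υ ∂μ t) hgc hgm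
  exact ⟨u, hu1, hu2, fun t _ => ⟨(hgc t).continuousOn, fun υ hυ => hu3 t υ hυ⟩⟩

end
end

section
/- (Bolza increment formula for Markovian strategies.) Let R : I × ℝⁿ × U → ℝ be bounded and Borel measurable. Let w̄ and w be Markovian strategies, μ̄ and μ solutions of the FPK equation for w̄ and for w respectively with the same initial law ϑ, and let p̄ be a bounded C^{1,2} function (with bounded ∂_t p̄, ∇_x p̄, ∇²_x p̄) satisfying ∂_s p̄_s(x) + ∇p̄_s(x)·f(s,x,w̄_s(x)) + β Δp̄_s(x) + R(s,x,w̄_s(x)) = 0 for all (s,x) and p̄_T = ℓ. Define the Bolza cost J[w] = ∫ ℓ dμ_T + ∫_0^T ∫ R(s,x,w_s(x)) dμ_s(x) ds and J[w̄] = ∫ ℓ dμ̄_T + ∫_0^T ∫ R(s,x,w̄_s(x)) dμ̄_s(x) ds. Then J[w] − J[w̄] = ∫_0^T ∫ [ (∇p̄_s(x)·f(s,x,w_s(x)) + R(s,x,w_s(x))) − (∇p̄_s(x)·f(s,x,w̄_s(x)) + R(s,x,w̄_s(x))) ] dμ_s(x) ds. -/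
open MeasureTheory intervalIntegral

noncomputable section

section Aux

open Filter Topology

variable {n : ℕ}

lemma Eu.sum_coord_smul_single (v : Eu n) :
    ∑ i : Fin n, v i • EuclideanSpace.single i (1 : ℝ) = v := by
  classical
  have h := (EuclideanSpace.basisFun (Fin n) ℝ).sum_repr v
  simpa [EuclideanSpace.basisFun_apply, EuclideanSpace.basisFun_repr] using h

lemma inner_gradient_eq_fderiv (φ : Eu n → ℝ) (x v : Eu n) :
    (inner ℝ (gradient φ x) v : ℝ) = fderiv ℝ φ x v := by
  rw [gradient]
  exact InnerProductSpace.toDual_symm_apply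

lemma tendsto_nat_add_one_atTop : Tendsto (fun k : ℕ => ((k : ℝ) + 1)) atTop atTop :=
  tendsto_atTop_add_const_right _ 1 tendsto_natCast_atTop_atTop

lemma measurable_fderiv_slice (pb : ℝ → Eu n → ℝ) (hpb : C12Bdd pb) (v : Eu n) (x : Eu n) :
    Measurable fun s => fderiv ℝ (pb s) x v := by
  apply measurable_of_tendsto_metrizable
    (f := fun k : ℕ => fun s => ((k : ℝ) + 1) • (pb s (x + (((k : ℝ) + 1))⁻¹ • v) - pb s x))
  · intro k
    exact (((hpb.smooth_t _).continuous.sub (hpb.smooth_t x).continuous).const_smul ((k : ℝ) + 1)).measurable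
  · rw [tendsto_pi_nhds]
    intro s
    have hd : HasFDerivAt (pb s) (fderiv ℝ (pb s) x) x :=
      (((hpb.smooth_x s).differentiable two_ne_zero) x).hasFDerivAt
    exact hd.lim v (by simpa [Real.norm_eq_abs, abs_of_nonneg, le_of_lt, Function.comp_def] using
      tendsto_abs_atTop_atTop.comp tendsto_nat_add_one_atTop)

lemma measurable_fderiv_joint (pb : ℝ → Eu n → ℝ) (hpb : C12Bdd pb) (v : Eu n) :
    Measurable fun p : ℝ × Eu n => fderiv ℝ (pb p.1) p.2 v := by
  have h := measurable_uncurry_of_continuous_of_measurable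
    (u := fun (x : Eu n) (s : ℝ) => fderiv ℝ (pb s) x v)
    (fun s => ((hpb.smooth_x s).continuous_fderiv two_ne_zero).clm_apply continuous_const)
    (fun x => measurable_fderiv_slice pb hpb v x)
  exact h.comp measurable_swap

lemma measurable_fderiv_apply_joint (pb : ℝ → Eu n → ℝ) (hpb : C12Bdd pb)
    (V : ℝ × Eu n → Eu n) (hV : Measurable V) :
    Measurable fun p : ℝ × Eu n => fderiv ℝ (pb p.1) p.2 (V p) := by
  have hrw : (fun p : ℝ × Eu n => fderiv ℝ (pb p.1) p.2 (V p)) =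
      fun p : ℝ × Eu n => ∑ i : Fin n,
        V p i * fderiv ℝ (pb p.1) p.2 (EuclideanSpace.single i 1) := by
    funext p
    conv_lhs => rw [← Eu.sum_coord_smul_single (V p)]
    rw [map_sum]
    simp [smul_eq_mul]
  rw [hrw]
  refine Finset.measurable_sum _ fun i _ => Measurable.mul ?_ (measurable_fderiv_joint pb hpb _)
  exact ((EuclideanSpace.proj (𝕜 := ℝ) i).continuous.measurable).comp hV

lemma measurable_of_integral_continuous (μ : ℝ → Measure (Eu n))
    (hprob : ∀ t, IsProbabilityMeasure (μ t))
    (h3 : ∀ φ : Eu n → ℝ, Continuous φ → (∃ C, ∀ x, |φ x| ≤ C) →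
      Measurable fun t => ∫ x, φ x ∂μ t) :
    Measurable μ := by
  rw [Measure.measurable_measure]
  intro A hA
  refine MeasurableSpace.induction_on_inter
    (C := fun (A : Set (Eu n)) _ => Measurable fun t => μ t A)
    (s := {s : Set (Eu n) | IsOpen s}) BorelSpace.measurable_eq isPiSystem_isOpen
    ?_ ?_ ?_ ?_ A hA
  · simp [measurable_const]
  · -- open sets
    intro U hU
    replace hU : IsOpen U := hU
    by_cases hUuniv : U = Set.univ
    · subst hUuniv
      have : (fun t => μ t Set.univ) = fun _ => (1 : ENNReal) := by
        funext t; haveI := hprob t; simp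
      rw [this]; exact measurable_const
    have hUc_ne : (Uᶜ : Set (Eu n)).Nonempty := Set.nonempty_compl.2 hUuniv
    set φ : ℕ → Eu n → ℝ :=
      fun k x => min 1 (((k : ℝ) + 1) * Metric.infDist x Uᶜ) with hφ
    have hφcont : ∀ k, Continuous (φ k) := fun k =>
      continuous_const.min (continuous_const.mul (Metric.continuous_infDist_pt _))
    have hφ0 : ∀ k x, 0 ≤ φ k x := fun k x =>
      le_min zero_le_one (mul_nonneg (by positivity) Metric.infDist_nonneg)
    have hφ1 : ∀ k x, φ k x ≤ 1 := fun k x => min_le_left _ _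
    have hφbdd : ∀ k, ∃ C, ∀ x, |φ k x| ≤ C := fun k =>
      ⟨1, fun x => abs_le.2 ⟨by linarith [hφ0 k x], hφ1 k x⟩⟩
    have htend : ∀ x, Tendsto (fun k => φ k x) atTop
        (𝓝 (Set.indicator U (fun _ => (1:ℝ)) x)) := by
      intro x
      by_cases hx : x ∈ U
      · have hxnot : x ∉ (Uᶜ : Set (Eu n)) := by simpa using hx
        have hd : 0 < Metric.infDist x Uᶜ :=
          (hU.isClosed_compl.notMem_iff_infDist_pos hUc_ne).1 hxnot
        have hlim : Tendsto (fun k : ℕ => ((k : ℝ) + 1) * Metric.infDist x Uᶜ) atTop atTop :=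
          tendsto_nat_add_one_atTop.atTop_mul_const hd
        have hev : ∀ᶠ k in atTop, φ k x = 1 := by
          filter_upwards [hlim.eventually_ge_atTop 1] with k hk
          simp [hφ, min_eq_left, hk]
        rw [Set.indicator_of_mem hx]
        exact Tendsto.congr' (by filter_upwards [hev] with k hk using hk.symm) tendsto_const_nhds
      · have : Metric.infDist x Uᶜ = 0 := Metric.infDist_zero_of_mem (by simpa using hx)
        rw [Set.indicator_of_notMem hx]
        have : ∀ k : ℕ, φ k x = 0 := fun k => by simp [hφ, this]
        simpa [this] using tendsto_const_nhds
    have hconv : ∀ t, Tendsto (fun k => ∫ x, φ k x ∂μ t) atTop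
        (𝓝 (∫ x, Set.indicator U (fun _ => (1:ℝ)) x ∂μ t)) := by
      intro t
      haveI := hprob t
      refine tendsto_integral_of_dominated_convergence (fun _ => (1:ℝ))
        (fun k => (hφcont k).aestronglyMeasurable) (integrable_const 1)
        (fun k => ae_of_all _ fun x => ?_) (ae_of_all _ htend)
      show ‖φ k x‖ ≤ 1
      rw [Real.norm_eq_abs]
      exact abs_le.2 ⟨by linarith [hφ0 k x], hφ1 k x⟩
    have hmeasInd : Measurable fun t => ∫ x, Set.indicator U (fun _ => (1:ℝ)) x ∂μ t :=
      measurable_of_tendsto_metrizable (fun k => h3 (φ k) (hφcont k) (hφbdd k))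
        (tendsto_pi_nhds.2 hconv)
    have hind : ∀ t, ∫ x, Set.indicator U (fun _ => (1:ℝ)) x ∂μ t = (μ t U).toReal := by
      intro t
      simpa [Measure.real, Pi.one_def] using integral_indicator_one (μ := μ t) hU.measurableSet
    have hmeasReal : Measurable fun t => (μ t U).toReal := by
      simp_rw [← hind]; exact hmeasInd
    have : (fun t => μ t U) = fun t => ENNReal.ofReal ((μ t U).toReal) := by
      funext t
      haveI := hprob t
      rw [ENNReal.ofReal_toReal (measure_ne_top _ _)]
    rw [this]
    exact ENNReal.measurable_ofReal.comp hmeasReal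
  · -- complements
    intro A hAm hmeas
    have : (fun t => μ t Aᶜ) = fun t => 1 - μ t A := by
      funext t
      haveI := hprob t
      rw [measure_compl hAm (measure_ne_top _ _), measure_univ]
    rw [this]
    exact measurable_const.sub hmeas
  · -- disjoint unions
    intro g hdisj hgm hmeas
    have : (fun t => μ t (⋃ i, g i)) = fun t => ∑' i, μ t (g i) := by
      funext t; exact measure_iUnion hdisj hgm
    rw [this]
    exact Measurable.ennreal_tsum hmeas

lemma measurable_integral_kernel (μ : ℝ → Measure (Eu n)) (hμ : Measurable μ)
    (hprob : ∀ t, IsProbabilityMeasure (μ t))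
    (g : ℝ × Eu n → ℝ) (hg : Measurable g) :
    Measurable fun t => ∫ x, g (t, x) ∂μ t := by
  let κ : ProbabilityTheory.Kernel ℝ (Eu n) := ⟨μ, hμ⟩
  haveI : ProbabilityTheory.IsFiniteKernel κ :=
    ⟨⟨1, ENNReal.one_lt_top, fun a => by
      haveI := hprob a
      exact le_of_eq (measure_univ (μ := μ a))⟩⟩
  exact (hg.stronglyMeasurable.integral_kernel_prod_right' (κ := κ)).measurable

end Aux

set_option maxHeartbeats 2000000 in
theorem bolza_increment_formula_markovian
    {n m : ℕ} (hn : 1 ≤ n) (hm : 1 ≤ m) (T : ℝ) (hT : 0 < T)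
    (U : Set (Eu m)) (hUne : U.Nonempty) (hUcp : IsCompact U)
    (f : ℝ → Eu n → Eu m → Eu n)
    (hfmeas : Measurable fun p : ℝ × Eu n × Eu m => f p.1 p.2.1 p.2.2)
    (hfbdd : ∃ C, ∀ t x υ, ‖f t x υ‖ ≤ C)
    (β : ℝ) (hβ : 0 < β)
    (ℓ : Eu n → ℝ) (hℓ : ContDiff ℝ 2 ℓ) (hℓbdd : ∃ C, ∀ x, |ℓ x| ≤ C)
    (R : ℝ → Eu n → Eu m → ℝ)
    (hRmeas : Measurable fun p : ℝ × Eu n × Eu m => R p.1 p.2.1 p.2.2)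
    (hRbdd : ∃ C, ∀ t x υ, |R t x υ| ≤ C)
    (wb : ℝ → Eu n → Eu m)
    (hwbmeas : Measurable fun p : ℝ × Eu n => wb p.1 p.2)
    (hwbU : ∀ t x, wb t x ∈ U)
    (w : ℝ → Eu n → Eu m)
    (hwmeas : Measurable fun p : ℝ × Eu n => w p.1 p.2)
    (hwU : ∀ t x, w t x ∈ U)
    (ϑ : Measure (Eu n)) (μb μ : ℝ → Measure (Eu n))
    (hFPKb : IsFPK T f β wb ϑ μb) (hFPK : IsFPK T f β w ϑ μ)
    (pb : ℝ → Eu n → ℝ) (hpb : C12Bdd pb)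
    (hpde : ∀ s ∈ Set.Icc (0:ℝ) T, ∀ x : Eu n,
      deriv (fun r => pb r x) s + (inner ℝ (gradient (pb s) x) (f s x (wb s x)) : ℝ)
        + β * lapl (pb s) x + R s x (wb s x) = 0)
    (hterm : ∀ x, pb T x = ℓ x) :
    ((∫ x, ℓ x ∂μ T) + ∫ s in (0:ℝ)..T, ∫ x, R s x (w s x) ∂μ s)
      - ((∫ x, ℓ x ∂μb T) + ∫ s in (0:ℝ)..T, ∫ x, R s x (wb s x) ∂μb s) =
      ∫ s in (0:ℝ)..T, ∫ x,
        (((inner ℝ (gradient (pb s) x) (f s x (w s x)) : ℝ) + R s x (w s x))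
          - ((inner ℝ (gradient (pb s) x) (f s x (wb s x)) : ℝ) + R s x (wb s x))) ∂μ s := by
  classical
  obtain ⟨hprob_b, hinit_b, hmeas3_b, hweak_b⟩ := hFPKb
  obtain ⟨hprob, hinit, hmeas3, hweak⟩ := hFPK
  obtain ⟨Cf, hCf⟩ := hfbdd
  obtain ⟨CR, hCR⟩ := hRbdd
  obtain ⟨Cg, hCg⟩ := hpb.bdd_grad
  have EQb := hweak_b pb hpb T ⟨hT.le, le_refl T⟩
  have EQ := hweak pb hpb T ⟨hT.le, le_refl T⟩
  simp only [inner_gradient_eq_fderiv] at hpde EQ EQb ⊢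
  have hCg0 : 0 ≤ Cg := (norm_nonneg (gradient (pb 0) 0)).trans (hCg 0 0)
  have hfdbd : ∀ (s : ℝ) (x v : Eu n), |fderiv ℝ (pb s) x v| ≤ Cg * ‖v‖ := by
    intro s x v
    rw [← inner_gradient_eq_fderiv]
    exact (abs_real_inner_le_norm _ _).trans
      (mul_le_mul_of_nonneg_right (hCg s x) (norm_nonneg v))
  -- joint measurable auxiliary functions
  have hRw : Measurable fun p : ℝ × Eu n => R p.1 p.2 (w p.1 p.2) :=
    hRmeas.comp (measurable_fst.prodMk (measurable_snd.prodMk hwmeas))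
  have hRwb : Measurable fun p : ℝ × Eu n => R p.1 p.2 (wb p.1 p.2) :=
    hRmeas.comp (measurable_fst.prodMk (measurable_snd.prodMk hwbmeas))
  have hFw : Measurable fun p : ℝ × Eu n => f p.1 p.2 (w p.1 p.2) :=
    hfmeas.comp (measurable_fst.prodMk (measurable_snd.prodMk hwmeas))
  have hFwb : Measurable fun p : ℝ × Eu n => f p.1 p.2 (wb p.1 p.2) :=
    hfmeas.comp (measurable_fst.prodMk (measurable_snd.prodMk hwbmeas))
  -- the target integrand, jointly measurable and bounded
  have hTmeas : Measurable fun p : ℝ × Eu n =>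
      ((fderiv ℝ (pb p.1) p.2 (f p.1 p.2 (w p.1 p.2)) + R p.1 p.2 (w p.1 p.2))
        - (fderiv ℝ (pb p.1) p.2 (f p.1 p.2 (wb p.1 p.2)) + R p.1 p.2 (wb p.1 p.2))) := by
    have h1 := measurable_fderiv_apply_joint pb hpb _ hFw
    have h2 := measurable_fderiv_apply_joint pb hpb _ hFwb
    exact (h1.add hRw).sub (h2.add hRwb)
  have hinnerbd : ∀ (s : ℝ) (x : Eu n) (u : Eu m),
      |fderiv ℝ (pb s) x (f s x u) + R s x u| ≤ Cg * Cf + CR := by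
    intro s x u
    refine (abs_add_le _ _).trans (add_le_add ?_ (hCR s x u))
    exact (hfdbd s x _).trans (mul_le_mul_of_nonneg_left (hCf s x u) hCg0)
  have hTbd : ∀ (s : ℝ) (x : Eu n),
      |((fderiv ℝ (pb s) x (f s x (w s x)) + R s x (w s x))
        - (fderiv ℝ (pb s) x (f s x (wb s x)) + R s x (wb s x)))|
        ≤ 2 * (Cg * Cf + CR) := by
    intro s x
    have h1 := hinnerbd s x (w s x)
    have h2 := hinnerbd s x (wb s x)
    have := abs_sub (fderiv ℝ (pb s) x (f s x (w s x)) + R s x (w s x))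
      (fderiv ℝ (pb s) x (f s x (wb s x)) + R s x (wb s x))
    linarith
  -- integrability in x at each fixed time
  have hTint : ∀ s : ℝ, Integrable (fun x =>
      ((fderiv ℝ (pb s) x (f s x (w s x)) + R s x (w s x))
        - (fderiv ℝ (pb s) x (f s x (wb s x)) + R s x (wb s x)))) (μ s) := by
    intro s
    haveI := hprob s
    have hmx : Measurable fun x : Eu n =>
        ((fderiv ℝ (pb s) x (f s x (w s x)) + R s x (w s x))
          - (fderiv ℝ (pb s) x (f s x (wb s x)) + R s x (wb s x))) :=
      hTmeas.comp measurable_prodMk_left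
    refine (integrable_const (2 * (Cg * Cf + CR))).mono'
      hmx.aestronglyMeasurable (ae_of_all _ fun x => ?_)
    simpa only [Real.norm_eq_abs] using hTbd s x
  have hRwint : ∀ s : ℝ, Integrable (fun x => R s x (w s x)) (μ s) := by
    intro s
    haveI := hprob s
    have hmx : Measurable fun x : Eu n => R s x (w s x) := hRw.comp measurable_prodMk_left
    refine (integrable_const CR).mono'
      hmx.aestronglyMeasurable (ae_of_all _ fun x => ?_)
    simpa only [Real.norm_eq_abs] using hCR s x (w s x)
  -- measurability in time of the integrals against μ
  have hμmeas : Measurable μ := measurable_of_integral_continuous μ hprob hmeas3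
  have hHmeas : Measurable fun s => ∫ x,
      ((fderiv ℝ (pb s) x (f s x (w s x)) + R s x (w s x))
        - (fderiv ℝ (pb s) x (f s x (wb s x)) + R s x (wb s x))) ∂μ s :=
    measurable_integral_kernel μ hμmeas hprob
      (fun p => ((fderiv ℝ (pb p.1) p.2 (f p.1 p.2 (w p.1 p.2)) + R p.1 p.2 (w p.1 p.2))
        - (fderiv ℝ (pb p.1) p.2 (f p.1 p.2 (wb p.1 p.2)) + R p.1 p.2 (wb p.1 p.2)))) hTmeas
  have hBmeas : Measurable fun s => ∫ x, R s x (w s x) ∂μ s :=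
    measurable_integral_kernel μ hμmeas hprob
      (fun p => R p.1 p.2 (w p.1 p.2)) hRw
  -- interval integrability
  have hHii : IntervalIntegrable (fun s => ∫ x,
      ((fderiv ℝ (pb s) x (f s x (w s x)) + R s x (w s x))
        - (fderiv ℝ (pb s) x (f s x (wb s x)) + R s x (wb s x))) ∂μ s)
      volume 0 T := by
    rw [intervalIntegrable_iff]
    refine Measure.integrableOn_of_bounded (M := 2 * (Cg * Cf + CR)) measure_Ioc_lt_top.ne
      hHmeas.aestronglyMeasurable (ae_of_all _ fun s => ?_)
    haveI := hprob s
    have := MeasureTheory.norm_integral_le_of_norm_le_const (μ := μ s)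
      (f := fun x : Eu n => ((fderiv ℝ (pb s) x (f s x (w s x)) + R s x (w s x))
        - (fderiv ℝ (pb s) x (f s x (wb s x)) + R s x (wb s x))))
      (C := 2 * (Cg * Cf + CR)) (ae_of_all _ fun x => by
        simpa only [Real.norm_eq_abs] using hTbd s x)
    simpa only [Real.norm_eq_abs, measure_univ, ENNReal.toReal_one, probReal_univ, mul_one] using this
  have hBii : IntervalIntegrable (fun s => ∫ x, R s x (w s x) ∂μ s) volume 0 T := by
    rw [intervalIntegrable_iff]
    refine Measure.integrableOn_of_bounded (M := CR) measure_Ioc_lt_top.ne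
      hBmeas.aestronglyMeasurable (ae_of_all _ fun s => ?_)
    haveI := hprob s
    have := MeasureTheory.norm_integral_le_of_norm_le_const (μ := μ s)
      (f := fun x : Eu n => R s x (w s x))
      (C := CR) (ae_of_all _ fun x => by
        simpa only [Real.norm_eq_abs] using hCR s x (w s x))
    simpa only [Real.norm_eq_abs, measure_univ, ENNReal.toReal_one, probReal_univ, mul_one] using this
  -- FPK identity for μb
  have hbint : (∫ s in (0:ℝ)..T, ∫ x, (deriv (fun r => pb r x) s
      + fderiv ℝ (pb s) x (f s x (wb s x)) + β * lapl (pb s) x) ∂μb s)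
      = -(∫ s in (0:ℝ)..T, ∫ x, R s x (wb s x) ∂μb s) := by
    rw [← intervalIntegral.integral_neg]
    apply intervalIntegral.integral_congr
    intro s hs
    rw [Set.uIcc_of_le hT.le] at hs
    beta_reduce
    rw [← MeasureTheory.integral_neg]
    refine integral_congr_ae (ae_of_all _ fun x => ?_)
    beta_reduce
    have := hpde s hs x
    linarith
  have key1 : (∫ x, ℓ x ∂μb T) = (∫ x, pb 0 x ∂ϑ)
      - ∫ s in (0:ℝ)..T, ∫ x, R s x (wb s x) ∂μb s := by
    have h1 : (∫ x, pb T x ∂μb T) = ∫ x, ℓ x ∂μb T := by simp only [hterm]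
    rw [hbint, hinit_b, h1] at EQb
    linarith
  -- FPK identity for μ
  have hfsplit : (∫ s in (0:ℝ)..T, ∫ x, (deriv (fun r => pb r x) s
      + fderiv ℝ (pb s) x (f s x (w s x)) + β * lapl (pb s) x) ∂μ s)
      = (∫ s in (0:ℝ)..T, ∫ x,
          ((fderiv ℝ (pb s) x (f s x (w s x)) + R s x (w s x))
            - (fderiv ℝ (pb s) x (f s x (wb s x)) + R s x (wb s x))) ∂μ s)
        - ∫ s in (0:ℝ)..T, ∫ x, R s x (w s x) ∂μ s := by
    rw [← intervalIntegral.integral_sub hHii hBii]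
    apply intervalIntegral.integral_congr
    intro s hs
    rw [Set.uIcc_of_le hT.le] at hs
    beta_reduce
    rw [← MeasureTheory.integral_sub (hTint s) (hRwint s)]
    refine integral_congr_ae (ae_of_all _ fun x => ?_)
    beta_reduce
    have := hpde s hs x
    linarith
  have key2 : (∫ x, ℓ x ∂μ T) = (∫ x, pb 0 x ∂ϑ)
      + (∫ s in (0:ℝ)..T, ∫ x,
          ((fderiv ℝ (pb s) x (f s x (w s x)) + R s x (w s x))
            - (fderiv ℝ (pb s) x (f s x (wb s x)) + R s x (wb s x))) ∂μ s)
        - ∫ s in (0:ℝ)..T, ∫ x, R s x (w s x) ∂μ s := by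
    have h1 : (∫ x, pb T x ∂μ T) = ∫ x, ℓ x ∂μ T := by simp only [hterm]
    rw [hfsplit, hinit, h1] at EQ
    linarith
  rw [key1, key2]
  ring
end
end

section
/- (Necessary optimality condition for the Bolza problem with Markovian strategies.) Let R : I × ℝⁿ × U → ℝ be bounded and Borel measurable, and define the extended Hamiltonian H̄_t(x,υ) = ∇p̄_t(x)·f(t,x,υ) + R(t,x,υ), where w̄, w are Markovian strategies, μ̄, μ are solutions of the FPK equation for w̄ and for w respectively with the same initial law ϑ, and p̄ is a bounded C^{1,2} function (with bounded ∂_t p̄, ∇_x p̄, ∇²_x p̄) satisfying ∂_s p̄_s(x) + ∇p̄_s(x)·f(s,x,w̄_s(x)) + β Δp̄_s(x) + R(s,x,w̄_s(x)) = 0 and p̄_T = ℓ. Assume that for almost every s ∈ I and every x ∈ ℝⁿ, H̄_s(x,w_s(x)) = min over υ ∈ U of H̄_s(x,υ), and that w̄ is optimal for the Bolza cost: ∫ ℓ dμ̄_T + ∫_0^T ∫ R(s,x,w̄_s(x)) dμ̄_s ds ≤ ∫ ℓ dμ_T + ∫_0^T ∫ R(s,x,w_s(x)) dμ_s ds. Then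 for almost every t ∈ I: ∫ H̄_t(x,w_t(x)) dμ_t(x) = ∫ H̄_t(x,w̄_t(x)) dμ_t(x). -/
open MeasureTheory intervalIntegral

noncomputable section

open Filter
open scoped ENNReal NNReal Topology
set_option maxHeartbeats 800000


-- aux lemma 1: measurability of measure-valued map
lemma meas_measure {n : ℕ} (μ : ℝ → Measure (Eu n))
    (hprob : ∀ t, IsProbabilityMeasure (μ t))
    (hcont : ∀ φ : Eu n → ℝ, Continuous φ → (∃ C, ∀ x, |φ x| ≤ C) →
      Measurable fun t => ∫ x, φ x ∂μ t) : Measurable μ := by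
  apply Measure.measurable_of_measurable_coe
  have key : ∀ F : Set (Eu n), IsClosed F → Measurable fun s => μ s F := by
    intro F hF
    have δpos : ∀ k : ℕ, (0:ℝ) < ((k:ℝ)+1)⁻¹ := fun k => by positivity
    have δlim : Filter.Tendsto (fun k : ℕ => ((k:ℝ)+1)⁻¹) Filter.atTop (nhds 0) :=
      tendsto_one_div_add_atTop_nhds_zero_nat.congr (fun k => by rw [one_div])
    have hlim : ∀ s, Filter.Tendsto
        (fun k => ∫⁻ x, (thickenedIndicator (δpos k) F x : ℝ≥0∞) ∂μ s)
        Filter.atTop (nhds (μ s F)) := fun s =>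
      tendsto_lintegral_thickenedIndicator_of_isClosed (μ s) hF δpos δlim
    refine ENNReal.measurable_of_tendsto (fun k => ?_) (tendsto_pi_nhds.2 hlim)
    have hint : ∀ s, Integrable (fun x => ((thickenedIndicator (δpos k) F x : ℝ≥0) : ℝ)) (μ s) := by
      intro s
      refine Integrable.mono' (integrable_const (1:ℝ))
        ((NNReal.continuous_coe.comp (thickenedIndicator (δpos k) F).continuous).aestronglyMeasurable)
        (ae_of_all _ fun x => ?_)
      rw [Real.norm_eq_abs, abs_of_nonneg (by positivity)]
      exact_mod_cast thickenedIndicator_le_one (δpos k) F x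
    have : (fun s => ∫⁻ x, (thickenedIndicator (δpos k) F x : ℝ≥0∞) ∂μ s)
        = fun s => ENNReal.ofReal (∫ x, ((thickenedIndicator (δpos k) F x : ℝ≥0) : ℝ) ∂μ s) := by
      funext s
      rw [← lintegral_coe_eq_integral _ (hint s)]
    rw [this]
    exact ENNReal.measurable_ofReal.comp <| hcont _
      (NNReal.continuous_coe.comp (thickenedIndicator (δpos k) F).continuous)
      ⟨1, fun x => by
        rw [abs_of_nonneg (by positivity)]
        exact_mod_cast thickenedIndicator_le_one (δpos k) F x⟩
  intro F hFmeas
  refine MeasurableSpace.induction_on_inter (C := fun F _ => Measurable fun s => μ s F)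
    (BorelSpace.measurable_eq.trans borel_eq_generateFrom_isClosed) isPiSystem_isClosed
    (by simp) (fun t ht => key t ht) ?_ ?_ F hFmeas
  · intro t htm iht
    have : (fun s => μ s tᶜ) = fun s => 1 - μ s t := by
      funext s
      have := hprob s
      rw [measure_compl htm (measure_ne_top _ _), measure_univ]
    rw [this]
    exact measurable_const.sub iht
  · intro g hdisj hgm ihg
    have : (fun s => μ s (⋃ i, g i)) = fun s => ∑' i, μ s (g i) := by
      funext s; exact measure_iUnion hdisj hgm
    rw [this]
    exact Measurable.ennreal_tsum ihg

lemma grad_eq_sum {n : ℕ} (g : Eu n → ℝ) (x : Eu n) :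
    gradient g x = ∑ i, (fderiv ℝ g x (EuclideanSpace.single i 1)) • EuclideanSpace.single i 1 := by
  have hrepr := (EuclideanSpace.basisFun (Fin n) ℝ).sum_repr' (gradient g x)
  rw [← hrepr]
  refine Finset.sum_congr rfl fun i _ => ?_
  rw [EuclideanSpace.basisFun_apply]
  congr 1
  rw [real_inner_comm]
  simp only [gradient]
  exact InnerProductSpace.toDual_symm_apply

lemma meas_grad {n : ℕ} (pb : ℝ → Eu n → ℝ)
    (hsmooth_t : ∀ x, ContDiff ℝ 1 fun t => pb t x)
    (hsmooth_x : ∀ t, ContDiff ℝ 2 (pb t)) :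
    Measurable fun p : ℝ × Eu n => gradient (pb p.1) p.2 := by
  have hD : ∀ (x v : Eu n), Measurable fun t => fderiv ℝ (pb t) x v := by
    intro x v
    have hmeas : ∀ k : ℕ, Measurable fun t =>
        (pb t (x + (((k:ℝ)+1)⁻¹ : ℝ) • v) - pb t x) / ((((k:ℝ)+1)⁻¹ : ℝ) - 0) := fun k =>
      ((((hsmooth_t _).continuous).sub ((hsmooth_t _).continuous)).div_const _).measurable
    refine measurable_of_tendsto_metrizable hmeas (tendsto_pi_nhds.2 fun t => ?_)
    have h0 : x + (0:ℝ) • v = x := by simp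
    have hline : HasDerivAt (fun h : ℝ => x + h • v) v 0 := by
      simpa using ((hasDerivAt_id (0:ℝ)).smul_const v).const_add x
    have hfd : HasFDerivAt (pb t) (fderiv ℝ (pb t) x) ((fun h : ℝ => x + h • v) 0) := by
      simpa [h0] using (((hsmooth_x t).differentiable (by norm_num)) x).hasFDerivAt
    have hcomp : HasDerivAt (fun h : ℝ => pb t (x + h • v)) (fderiv ℝ (pb t) x v) 0 :=
      hfd.comp_hasDerivAt 0 hline
    have hslope := hasDerivAt_iff_tendsto_slope.mp hcomp
    have hseq : Tendsto (fun k : ℕ => (((k:ℝ)+1)⁻¹)) atTop (𝓝[≠] (0:ℝ)) := by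
      refine tendsto_nhdsWithin_of_tendsto_nhds_of_eventually_within _
        (tendsto_one_div_add_atTop_nhds_zero_nat.congr (fun k => by rw [one_div])) ?_
      exact Eventually.of_forall fun k =>
        Set.mem_compl_singleton_iff.mpr (by positivity)
    have := hslope.comp hseq
    refine this.congr fun k => ?_
    simp only [Function.comp_apply, slope_def_field, h0]

  have hsumrw : ∀ x : Eu n, (fun t => gradient (pb t) x)
      = fun t => ∑ i, (fderiv ℝ (pb t) x (EuclideanSpace.single i 1)) • EuclideanSpace.single i 1 :=
    fun x => funext fun t => grad_eq_sum (pb t) x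
  have hmt : ∀ x : Eu n, Measurable fun t => gradient (pb t) x := by
    intro x
    rw [hsumrw x]
    exact Finset.measurable_sum _ fun i _ => (hD x _).smul_const _
  have hcx : ∀ t : ℝ, Continuous fun x => gradient (pb t) x := by
    intro t
    have : (fun x => gradient (pb t) x)
        = fun x => (InnerProductSpace.toDual ℝ (Eu n)).symm (fderiv ℝ (pb t) x) := rfl
    rw [this]
    exact (InnerProductSpace.toDual ℝ (Eu n)).symm.continuous.comp
      ((hsmooth_x t).continuous_fderiv (by norm_num))
  have key := measurable_uncurry_of_continuous_of_measurable
    (u := fun (x : Eu n) (t : ℝ) => gradient (pb t) x) hcx hmt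
  exact key.comp measurable_swap

theorem necessary_optimality_bolza_markovian
    {n m : ℕ} (hn : 1 ≤ n) (hm : 1 ≤ m) (T : ℝ) (hT : 0 < T)
    (U : Set (Eu m)) (hUne : U.Nonempty) (hUcp : IsCompact U)
    (f : ℝ → Eu n → Eu m → Eu n)
    (hfmeas : Measurable fun p : ℝ × Eu n × Eu m => f p.1 p.2.1 p.2.2)
    (hfbdd : ∃ C, ∀ t x υ, ‖f t x υ‖ ≤ C)
    (β : ℝ) (hβ : 0 < β)
    (ℓ : Eu n → ℝ) (hℓ : ContDiff ℝ 2 ℓ) (hℓbdd : ∃ C, ∀ x, |ℓ x| ≤ C)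
    (R : ℝ → Eu n → Eu m → ℝ)
    (hRmeas : Measurable fun p : ℝ × Eu n × Eu m => R p.1 p.2.1 p.2.2)
    (hRbdd : ∃ C, ∀ t x υ, |R t x υ| ≤ C)
    (wb : ℝ → Eu n → Eu m)
    (hwbmeas : Measurable fun p : ℝ × Eu n => wb p.1 p.2)
    (hwbU : ∀ t x, wb t x ∈ U)
    (w : ℝ → Eu n → Eu m)
    (hwmeas : Measurable fun p : ℝ × Eu n => w p.1 p.2)
    (hwU : ∀ t x, w t x ∈ U)
    (ϑ : Measure (Eu n)) (μb μ : ℝ → Measure (Eu n))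
    (hFPKb : IsFPK T f β wb ϑ μb) (hFPK : IsFPK T f β w ϑ μ)
    (pb : ℝ → Eu n → ℝ) (hpb : C12Bdd pb)
    (hpde : ∀ s ∈ Set.Icc (0:ℝ) T, ∀ x : Eu n,
      deriv (fun r => pb r x) s + (inner ℝ (gradient (pb s) x) (f s x (wb s x)) : ℝ)
        + β * lapl (pb s) x + R s x (wb s x) = 0)
    (hterm : ∀ x, pb T x = ℓ x)
    (hmin : ∀ᵐ s ∂(volume.restrict (Set.Icc (0:ℝ) T)), ∀ x : Eu n, ∀ υ ∈ U,
      (inner ℝ (gradient (pb s) x) (f s x (w s x)) : ℝ) + R s x (w s x) ≤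
        (inner ℝ (gradient (pb s) x) (f s x υ) : ℝ) + R s x υ)
    (hopt : (∫ x, ℓ x ∂μb T) + (∫ s in (0:ℝ)..T, ∫ x, R s x (wb s x) ∂μb s) ≤
      (∫ x, ℓ x ∂μ T) + ∫ s in (0:ℝ)..T, ∫ x, R s x (w s x) ∂μ s) :
    ∀ᵐ t ∂(volume.restrict (Set.Icc (0:ℝ) T)),
      (∫ x, ((inner ℝ (gradient (pb t) x) (f t x (w t x)) : ℝ) + R t x (w t x)) ∂μ t) =
        ∫ x, ((inner ℝ (gradient (pb t) x) (f t x (wb t x)) : ℝ) + R t x (wb t x)) ∂μ t := by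
  classical
  obtain ⟨hprob, hμ0, hcontμ, heq⟩ := hFPK
  obtain ⟨hprobb, hμb0, hcontμb, heqb⟩ := hFPKb
  obtain ⟨Cf, hCf⟩ := hfbdd
  obtain ⟨CR, hCR⟩ := hRbdd
  obtain ⟨Cg, hCg⟩ := hpb.bdd_grad
  set A : ℝ → Eu n → ℝ :=
    fun t x => (inner ℝ (gradient (pb t) x) (f t x (w t x)) : ℝ) + R t x (w t x) with hA
  set B : ℝ → Eu n → ℝ :=
    fun t x => (inner ℝ (gradient (pb t) x) (f t x (wb t x)) : ℝ) + R t x (wb t x) with hB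
  show ∀ᵐ t ∂(volume.restrict (Set.Icc (0:ℝ) T)),
      (∫ x, A t x ∂μ t) = ∫ x, B t x ∂μ t
  -- measurability
  have hgradm : Measurable fun p : ℝ × Eu n => gradient (pb p.1) p.2 :=
    meas_grad pb hpb.smooth_t hpb.smooth_x
  have hwm' : Measurable fun p : ℝ × Eu n => (p.1, p.2, w p.1 p.2) :=
    measurable_fst.prodMk (measurable_snd.prodMk hwmeas)
  have hwbm' : Measurable fun p : ℝ × Eu n => (p.1, p.2, wb p.1 p.2) :=
    measurable_fst.prodMk (measurable_snd.prodMk hwbmeas)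
  have hAm : Measurable fun p : ℝ × Eu n => A p.1 p.2 := by
    rw [hA]
    exact (hgradm.inner (hfmeas.comp hwm')).add (hRmeas.comp hwm')
  have hBm : Measurable fun p : ℝ × Eu n => B p.1 p.2 := by
    rw [hB]
    exact (hgradm.inner (hfmeas.comp hwbm')).add (hRmeas.comp hwbm')
  have hRwm : Measurable fun p : ℝ × Eu n => R p.1 p.2 (w p.1 p.2) := hRmeas.comp hwm'
  -- bounds
  have hCg0 : 0 ≤ Cg := le_trans (norm_nonneg _) (hCg 0 0)
  have hCR0 : 0 ≤ CR := le_trans (abs_nonneg _) (hCR 0 0 0)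
  set c : ℝ := Cg * Cf + CR with hc
  have hc0 : 0 ≤ c := by
    have : 0 ≤ Cg * Cf :=
      mul_nonneg hCg0 (le_trans (norm_nonneg _) (hCf 0 0 0))
    simp only [hc]; linarith
  have hip : ∀ (t : ℝ) (x : Eu n) (υ : Eu m),
      |(inner ℝ (gradient (pb t) x) (f t x υ) : ℝ) + R t x υ| ≤ c := by
    intro t x υ
    have h1 : |(inner ℝ (gradient (pb t) x) (f t x υ) : ℝ)| ≤ Cg * Cf :=
      le_trans (abs_real_inner_le_norm _ _)
        (mul_le_mul (hCg t x) (hCf t x υ) (norm_nonneg _) hCg0)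
    calc |(inner ℝ (gradient (pb t) x) (f t x υ) : ℝ) + R t x υ|
        ≤ |(inner ℝ (gradient (pb t) x) (f t x υ) : ℝ)| + |R t x υ| := abs_add_le _ _
      _ ≤ c := by rw [hc]; exact add_le_add h1 (hCR t x υ)
  have hAb : ∀ t x, |A t x| ≤ c := fun t x => hip t x (w t x)
  have hBb : ∀ t x, |B t x| ≤ c := fun t x => hip t x (wb t x)
  -- integrability in x
  have hAint : ∀ s, Integrable (A s) (μ s) := by
    intro s
    haveI := hprob s
    exact Integrable.mono' (integrable_const c)
      ((hAm.comp measurable_prodMk_left).aestronglyMeasurable)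
      (ae_of_all _ fun x => by rw [Real.norm_eq_abs]; exact hAb s x)
  have hBint : ∀ s, Integrable (B s) (μ s) := by
    intro s
    haveI := hprob s
    exact Integrable.mono' (integrable_const c)
      ((hBm.comp measurable_prodMk_left).aestronglyMeasurable)
      (ae_of_all _ fun x => by rw [Real.norm_eq_abs]; exact hBb s x)
  have hRwint : ∀ s, Integrable (fun x => R s x (w s x)) (μ s) := by
    intro s
    haveI := hprob s
    exact Integrable.mono' (integrable_const CR)
      ((hRwm.comp measurable_prodMk_left).aestronglyMeasurable)
      (ae_of_all _ fun x => by rw [Real.norm_eq_abs]; exact hCR s x (w s x))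
  -- kernel and measurability in time
  have hμmeas : Measurable μ := meas_measure μ hprob hcontμ
  let κ : ProbabilityTheory.Kernel ℝ (Eu n) := ⟨μ, hμmeas⟩
  haveI : ProbabilityTheory.IsMarkovKernel κ := ⟨fun s => hprob s⟩
  have hmint : ∀ (F : ℝ → Eu n → ℝ), Measurable (fun p : ℝ × Eu n => F p.1 p.2) →
      Measurable fun s => ∫ x, F s x ∂μ s := by
    intro F hF
    exact (MeasureTheory.StronglyMeasurable.integral_kernel_prod_right' (κ := κ)
      (f := fun p : ℝ × Eu n => F p.1 p.2) hF.stronglyMeasurable).measurable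
  -- interval integrability helper
  have hII : ∀ (F : ℝ → Eu n → ℝ) (CC : ℝ), Measurable (fun p : ℝ × Eu n => F p.1 p.2) →
      (∀ s x, |F s x| ≤ CC) →
      IntervalIntegrable (fun s => ∫ x, F s x ∂μ s) volume 0 T := by
    intro F CC hFm hFb
    rw [intervalIntegrable_iff]
    refine Integrable.mono' (g := fun _ => CC)
      (integrableOn_const (by rw [Set.uIoc_of_le hT.le]; exact measure_Ioc_lt_top.ne))
      ((hmint F hFm).aestronglyMeasurable.restrict) (ae_of_all _ fun s => ?_)
    haveI := hprob s
    have hb := norm_integral_le_of_norm_le_const (μ := μ s) (f := F s) (C := CC)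
      (ae_of_all _ fun x => by rw [Real.norm_eq_abs]; exact hFb s x)
    simpa using hb
  -- FPK identities
  have huIcc : Set.uIcc (0:ℝ) T = Set.Icc 0 T := Set.uIcc_of_le hT.le
  have h1' : (∫ x, ℓ x ∂μ T) - (∫ x, pb 0 x ∂ϑ)
      = ∫ s in (0:ℝ)..T, ∫ x, (A s x - B s x - R s x (w s x)) ∂μ s := by
    have h1 := heq pb hpb T ⟨hT.le, le_refl T⟩
    rw [hμ0] at h1
    simp only [hterm] at h1
    rw [h1]
    refine intervalIntegral.integral_congr ?_
    intro s hs
    rw [huIcc] at hs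
    beta_reduce
    congr 1
    funext x
    have hp := hpde s hs x
    simp only [hA, hB]
    linarith
  have h2' : (∫ x, ℓ x ∂μb T) - (∫ x, pb 0 x ∂ϑ)
      = - ∫ s in (0:ℝ)..T, ∫ x, R s x (wb s x) ∂μb s := by
    have h2 := heqb pb hpb T ⟨hT.le, le_refl T⟩
    rw [hμb0] at h2
    simp only [hterm] at h2
    rw [h2, ← _root_.intervalIntegral.integral_neg]
    refine intervalIntegral.integral_congr ?_
    intro s hs
    rw [huIcc] at hs
    beta_reduce
    rw [← MeasureTheory.integral_neg]
    congr 1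
    funext x
    have hp := hpde s hs x
    linarith
  have hineq : 0 ≤ (∫ s in (0:ℝ)..T, ∫ x, (A s x - B s x - R s x (w s x)) ∂μ s)
      + ∫ s in (0:ℝ)..T, ∫ x, R s x (w s x) ∂μ s := by linarith
  -- split
  have hiAB : IntervalIntegrable (fun s => ∫ x, (A s x - B s x) ∂μ s) volume 0 T :=
    hII (fun s x => A s x - B s x) (2*c) (hAm.sub hBm)
      (fun s x => le_trans (abs_sub _ _) (by linarith [hAb s x, hBb s x]))
  have hiRw : IntervalIntegrable (fun s => ∫ x, R s x (w s x) ∂μ s) volume 0 T :=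
    hII (fun s x => R s x (w s x)) CR hRwm (fun s x => hCR s x (w s x))
  have hsplit : (∫ s in (0:ℝ)..T, ∫ x, (A s x - B s x - R s x (w s x)) ∂μ s)
      = (∫ s in (0:ℝ)..T, ∫ x, (A s x - B s x) ∂μ s)
        - ∫ s in (0:ℝ)..T, ∫ x, R s x (w s x) ∂μ s := by
    rw [← intervalIntegral.integral_sub hiAB hiRw]
    refine intervalIntegral.integral_congr fun s _ => ?_
    exact integral_sub ((hAint s).sub (hBint s)) (hRwint s)
  have hkey : 0 ≤ ∫ s in (0:ℝ)..T, ∫ x, (A s x - B s x) ∂μ s := by linarith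
  -- nonnegativity of ∫ (B - A)
  have hGneg : ∀ s, (∫ x, (B s x - A s x) ∂μ s) = - ∫ x, (A s x - B s x) ∂μ s := by
    intro s
    rw [← MeasureTheory.integral_neg]
    congr 1
    funext x
    ring
  have hkey' : (∫ s in (0:ℝ)..T, ∫ x, (B s x - A s x) ∂μ s) ≤ 0 := by
    have hfe : (fun s => ∫ x, (B s x - A s x) ∂μ s)
        = fun s => - ∫ x, (A s x - B s x) ∂μ s := funext hGneg
    rw [hfe, _root_.intervalIntegral.integral_neg]
    linarith
  have hIoc : (∫ s in Set.Ioc (0:ℝ) T, (∫ x, (B s x - A s x) ∂μ s)) ≤ 0 := by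
    rw [← intervalIntegral.integral_of_le hT.le]
    exact hkey'
  have hGpos : ∀ᵐ s ∂(volume.restrict (Set.Icc (0:ℝ) T)),
      0 ≤ ∫ x, (B s x - A s x) ∂μ s := by
    refine hmin.mono fun s hs => integral_nonneg fun x => sub_nonneg.2 ?_
    exact hs x (wb s x) (hwbU s x)
  have hGposIoc : 0 ≤ᵐ[volume.restrict (Set.Ioc (0:ℝ) T)]
      fun s => ∫ x, (B s x - A s x) ∂μ s :=
    Filter.Eventually.filter_mono
      (ae_mono (Measure.restrict_mono Set.Ioc_subset_Icc_self le_rfl)) hGpos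
  have hGint : IntegrableOn (fun s => ∫ x, (B s x - A s x) ∂μ s) (Set.Ioc 0 T) volume := by
    have h := hII (fun s x => B s x - A s x) (2*c) (hBm.sub hAm)
      (fun s x => le_trans (abs_sub _ _) (by linarith [hAb s x, hBb s x]))
    rw [intervalIntegrable_iff, Set.uIoc_of_le hT.le] at h
    exact h
  have hzero : (fun s => ∫ x, (B s x - A s x) ∂μ s)
      =ᵐ[volume.restrict (Set.Ioc (0:ℝ) T)] 0 := by
    have h0le := integral_nonneg_of_ae hGposIoc
    exact (MeasureTheory.integral_eq_zero_iff_of_nonneg_ae hGposIoc hGint).mp (le_antisymm hIoc h0le)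
  have hrs : volume.restrict (Set.Icc (0:ℝ) T) = volume.restrict (Set.Ioc (0:ℝ) T) :=
    (Measure.restrict_congr_set MeasureTheory.Ioc_ae_eq_Icc).symm
  rw [hrs]
  refine hzero.mono fun s hs => ?_
  have h3 : (∫ x, (B s x - A s x) ∂μ s) = 0 := hs
  have h4 : (∫ x, (B s x - A s x) ∂μ s) = (∫ x, B s x ∂μ s) - ∫ x, A s x ∂μ s :=
    integral_sub (hBint s) (hAint s)
  linarith
end
end
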